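/- If θ > θ1, θ > θ2, α > 1/(K h), and c2 < c < c1, then G > 0 and H > 0. -/

import Mathlib

/-- If θ > θ₁, θ > θ₂, α > 1/(Kh) and c₂ < c < c₁, then G > 0 and H > 0. -/
theorem G_H_positive
    (r K α h d θ c xs G H : ℝ)
    (hr : 0 < r) (hK : 0 < K) (hα : 0 < α) (hh : 0 < h) (hd : 0 < d)
    (hθ0 : 0 < θ) (hθlt : θ < 1) (hc0 : 0 < c) (hclt : c < 1)
    (hθ1 : θ > h * d + d / (α * K))
    (hθ2 : θ > h * d * (α * K * h + 1) / (α * K * h - 1))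
    (hα' : α > 1 / (K * h))
    (hc2 : c > 1 - (θ + h * d) / (α * K * h * (θ - h * d)))
    (hc1 : c < 1 - d / (α * K * (θ - h * d)))
    (hxs : xs = d / (α * (1 - c) * (θ - h * d)))
    (hG : G = (r * xs / (K * θ)) * (θ + h * d - α * h * K * (1 - c) * (θ - h * d)))
    (hH : H = (r * xs * (θ - h * d) / (K * θ)) * (α * K * (1 - c) * (θ - h * d) - d)) :
    0 < G ∧ 0 < H := by
  have hdK : 0 < d / (α * K) := by positivity
  have hmd : 0 < θ - h * d := by linarith
  have h1c : 0 < 1 - c := by linarith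
  have hP : 0 < α * K * (θ - h * d) := by positivity
  have hQ : 0 < α * K * h * (θ - h * d) := by positivity
  -- from hc1 : d / P < 1 - c  ⇒ d < (1-c)*P
  have hH1 : d < (1 - c) * (α * K * (θ - h * d)) := by
    have : d / (α * K * (θ - h * d)) < 1 - c := by linarith
    calc d = d / (α * K * (θ - h * d)) * (α * K * (θ - h * d)) := by
            rw [div_mul_cancel₀]; exact hP.ne'
      _ < (1 - c) * (α * K * (θ - h * d)) := by
            exact mul_lt_mul_of_pos_right this hP
  -- from hc2 : 1 - c < (θ+hd)/Q  ⇒ (1-c)*Q < θ+hd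
  have hG1 : (1 - c) * (α * K * h * (θ - h * d)) < θ + h * d := by
    have h2 : 1 - c < (θ + h * d) / (α * K * h * (θ - h * d)) := by linarith
    calc (1 - c) * (α * K * h * (θ - h * d))
        < (θ + h * d) / (α * K * h * (θ - h * d)) * (α * K * h * (θ - h * d)) :=
          mul_lt_mul_of_pos_right h2 hQ
      _ = θ + h * d := by field_simp
  have hxs0 : 0 < xs := by rw [hxs]; positivity
  constructor
  · rw [hG]
    have hfac : 0 < θ + h * d - α * h * K * (1 - c) * (θ - h * d) := by nlinarith
    have : 0 < r * xs / (K * θ) := by positivity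
    exact mul_pos this hfac
  · rw [hH]
    have hfac : 0 < α * K * (1 - c) * (θ - h * d) - d := by nlinarith
    have : 0 < r * xs * (θ - h * d) / (K * θ) := by positivity
    exact mul_pos this hfac
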